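/- Let Ω ⊂ ℝ³ be a bounded Lipschitz domain, and suppose u ∈ C([0,T]; C^{1/4}(Ω̄)) satisfies the uniform Hölder bound ⟨u(·,t)⟩^{1/4}_{Ω̄} ≤ A for all t ∈ [τ, T], and ∫_{t₁}^{t₂} ∫_Ω |u_t|² dx dt ≤ B²|t₂−t₁|⁰ (i.e. u_t ∈ L²(Ω×(τ,T)) with norm ≤ B). Then for all x ∈ Ω̄ and τ ≤ t₁ < t₂ ≤ T with |t₂ − t₁| ≤ 1: |u(x,t₂) − u(x,t₁)| ≤ C(A, B, Ω)·|t₂ − t₁|^{1/14}. -/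

import Mathlib

open MeasureTheory Set Filter

lemma my_cs {α : Type*} [MeasurableSpace α] (μ : Measure α) [IsFiniteMeasure μ]
    (g : α → ℝ) (hg0 : ∀ a, 0 ≤ g a) (hgm : AEStronglyMeasurable g μ)
    (Cb : ℝ) (hgb : ∀ᵐ a ∂μ, ‖g a‖ ≤ Cb) :
    ∫ a, g a ∂μ ≤ Real.sqrt (μ univ).toReal * Real.sqrt (∫ a, g a ^ 2 ∂μ) := by
  have hpq : (2:ℝ).HolderConjugate 2 := Real.HolderConjugate.two_two
  have hg2 : MemLp g (ENNReal.ofReal 2) μ := by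
    rw [show ENNReal.ofReal 2 = 2 by simp]
    exact MemLp.of_bound hgm Cb hgb
  have h1 : MemLp (fun _ : α => (1:ℝ)) (ENNReal.ofReal 2) μ := memLp_const 1
  have H := MeasureTheory.integral_mul_le_Lp_mul_Lq_of_nonneg hpq
    (Eventually.of_forall hg0) (Eventually.of_forall fun a => zero_le_one) hg2 h1
  simp only [mul_one, Real.one_rpow] at H
  have hrw : ∀ x : ℝ, 0 ≤ x → x ^ ((1:ℝ)/2) = Real.sqrt x := fun x hx =>
    (Real.sqrt_eq_rpow x).symm
  have hint : (∫ a, g a ^ (2:ℝ) ∂μ) = ∫ a, g a ^ 2 ∂μ := by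
    refine integral_congr_ae (Eventually.of_forall fun a => ?_)
    show g a ^ (2:ℝ) = g a ^ (2:ℕ)
    rw [show (2:ℝ) = ((2:ℕ):ℝ) by norm_num, Real.rpow_natCast]
  have hconst : (∫ _ : α, (1:ℝ) ∂μ) = (μ univ).toReal := by simp [Measure.real]
  rw [hint, hconst] at H
  calc ∫ a, g a ∂μ ≤ (∫ a, g a ^ 2 ∂μ) ^ ((1:ℝ)/2) * ((μ univ).toReal) ^ ((1:ℝ)/2) := H
    _ = Real.sqrt (μ univ).toReal * Real.sqrt (∫ a, g a ^ 2 ∂μ) := by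
        rw [hrw _ (integral_nonneg fun a => sq_nonneg _), hrw _ ENNReal.toReal_nonneg,
          mul_comm]

lemma aux_sqrt (a b c : ℝ) (ha : 0 ≤ a) (hb : 0 < b) :
    b⁻¹ * (Real.sqrt (a * b) * c) = Real.sqrt a * c / Real.sqrt b := by
  have hsb : 0 < Real.sqrt b := Real.sqrt_pos.mpr hb
  rw [Real.sqrt_mul ha, eq_div_iff hsb.ne']
  have h := Real.mul_self_sqrt hb.le
  field_simp
  linear_combination (Real.sqrt a * c) * h


/-- Hölder continuity in time: on a bounded domain with the interior measure
density property (Lipschitz domain), a field that is uniformly `C^{1/4}` in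
space on `[τ, T]` and whose time derivative is square integrable in space-time
is `C^{1/14}` in time, with constant depending only on `A`, `B`, `Ω`. -/
theorem stmt_17 (Ω : Set (Fin 3 → ℝ)) (hΩb : Bornology.IsBounded Ω)
    (hΩm : MeasurableSet Ω)
    (θ : ℝ) (hθpos : 0 < θ)
    (hθ : ∀ x ∈ closure Ω, ∀ R : ℝ, 0 < R → R ≤ 1 →
      ENNReal.ofReal (θ * R ^ 3) ≤ volume (Metric.ball x R ∩ Ω))
    (A B τ T : ℝ) (hτ : 0 < τ) (hτT : τ ≤ T) (hA : 0 ≤ A) (hB : 0 ≤ B) :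
    ∃ C : ℝ, 0 < C ∧
      ∀ (u ut : ℝ → (Fin 3 → ℝ) → (Fin 3 → ℝ)),
        Continuous (Function.uncurry u) →
        Continuous (Function.uncurry ut) →
        (∀ x ∈ closure Ω, ∀ t ∈ Icc τ T, HasDerivAt (fun s => u s x) (ut t x) t) →
        (∀ t ∈ Icc τ T, ∀ x ∈ closure Ω, ∀ y ∈ closure Ω,
          ‖u t x - u t y‖ ≤ A * ‖x - y‖ ^ ((1:ℝ)/4)) →
        ((∫ t in τ..T, ∫ x in Ω, ‖ut t x‖ ^ 2) ≤ B ^ 2) →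
        ∀ x ∈ closure Ω, ∀ t₁ t₂ : ℝ, τ ≤ t₁ → t₁ < t₂ → t₂ ≤ T →
          t₂ - t₁ ≤ 1 →
          ‖u t₂ x - u t₁ x‖ ≤ C * (t₂ - t₁) ^ ((1:ℝ)/14) := by
  have hsθ : 0 < Real.sqrt θ := Real.sqrt_pos.mpr hθpos
  refine ⟨2*A + B / Real.sqrt θ + 1, by positivity, ?_⟩
  intro u ut hu hut hderiv hHold hL2 x hx t₁ t₂ ht₁ h12 ht₂ hle1
  set δ := t₂ - t₁ with hδdef
  have hδ0 : 0 < δ := sub_pos.mpr h12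
  have ht₁T : t₁ ∈ Icc τ T := ⟨ht₁, h12.le.trans ht₂⟩
  have ht₂T : t₂ ∈ Icc τ T := ⟨ht₁.trans h12.le, ht₂⟩
  set R := δ ^ ((2:ℝ)/7) with hRdef
  have hR0 : 0 < R := Real.rpow_pos_of_pos hδ0 _
  have hR1 : R ≤ 1 := Real.rpow_le_one hδ0.le hle1 (by norm_num)
  set S := Metric.ball x R ∩ Ω with hSdef
  have hSsub : S ⊆ Ω := inter_subset_right
  have hSsubc : S ⊆ closure Ω := hSsub.trans subset_closure
  have hSm : MeasurableSet S := measurableSet_ball.inter hΩm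
  have hSfin : volume S < ⊤ :=
    lt_of_le_of_lt (measure_mono inter_subset_left) measure_ball_lt_top
  set m := (volume S).toReal with hmdef
  have hmθ : θ * R ^ 3 ≤ m :=
    (ENNReal.ofReal_le_iff_le_toReal hSfin.ne).mp (hθ x hx R hR0 hR1)
  have hm0 : 0 < m := lt_of_lt_of_le (by positivity) hmθ
  -- bounds
  have hKcomp : IsCompact ((Icc τ T) ×ˢ closure Ω) :=
    isCompact_Icc.prod hΩb.isCompact_closure
  obtain ⟨Mu, hMu⟩ := hKcomp.exists_bound_of_continuousOn hu.continuousOn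
  obtain ⟨Mt, hMt⟩ := hKcomp.exists_bound_of_continuousOn hut.continuousOn
  have hubd : ∀ t ∈ Icc τ T, ∀ y ∈ closure Ω, ‖u t y‖ ≤ Mu := fun t ht y hy =>
    hMu (t, y) ⟨ht, hy⟩
  have hutbd : ∀ t ∈ Icc τ T, ∀ y ∈ closure Ω, ‖ut t y‖ ≤ Mt := fun t ht y hy =>
    hMt (t, y) ⟨ht, hy⟩
  -- integrability of u t on S
  have hcontu : ∀ t : ℝ, Continuous fun y => u t y := fun t =>
    hu.comp (Continuous.prodMk_right t)
  have hInt : ∀ t ∈ Icc τ T, IntegrableOn (fun y => u t y) S := fun t ht =>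
    Measure.integrableOn_of_bounded hSfin.ne (hcontu t).aestronglyMeasurable
      ((ae_restrict_iff' hSm).mpr (ae_of_all _ fun y hy => hubd t ht y (hSsubc hy)))
  have hI1int : IntegrableOn (fun y => u t₂ x - u t₂ y) S :=
    (integrableOn_const hSfin.ne).sub (hInt t₂ ht₂T)
  have hI2int : IntegrableOn (fun y => u t₂ y - u t₁ y) S :=
    (hInt t₂ ht₂T).sub (hInt t₁ ht₁T)
  have hI3int : IntegrableOn (fun y => u t₁ y - u t₁ x) S :=
    (hInt t₁ ht₁T).sub (integrableOn_const hSfin.ne)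
  -- decomposition
  have e2 : (∫ y in S, ((u t₂ x - u t₂ y) + ((u t₂ y - u t₁ y) + (u t₁ y - u t₁ x))))
      = (∫ y in S, (u t₂ x - u t₂ y)) + ((∫ y in S, (u t₂ y - u t₁ y))
        + (∫ y in S, (u t₁ y - u t₁ x))) := by
    exact (integral_add hI1int (hI2int.add hI3int)).trans
      (congrArg (fun z => (∫ y in S, (u t₂ x - u t₂ y)) + z)
        (integral_add hI2int hI3int))
  have e1 : (∫ y in S, ((u t₂ x - u t₂ y) + ((u t₂ y - u t₁ y) + (u t₁ y - u t₁ x))))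
      = m • (u t₂ x - u t₁ x) := by
    have heq : (fun y => (u t₂ x - u t₂ y) + ((u t₂ y - u t₁ y) + (u t₁ y - u t₁ x)))
        = fun _ : Fin 3 → ℝ => u t₂ x - u t₁ x := funext fun y => by abel
    rw [heq, setIntegral_const]; rfl
  have hsum : (∫ y in S, (u t₂ x - u t₂ y)) + ((∫ y in S, (u t₂ y - u t₁ y))
      + (∫ y in S, (u t₁ y - u t₁ x))) = m • (u t₂ x - u t₁ x) := e2 ▸ e1
  have key : u t₂ x - u t₁ x = m⁻¹ • ((∫ y in S, (u t₂ x - u t₂ y))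
      + ((∫ y in S, (u t₂ y - u t₁ y)) + (∫ y in S, (u t₁ y - u t₁ x)))) := by
    rw [hsum, smul_smul, inv_mul_cancel₀ hm0.ne', one_smul]
  -- Hölder bounds for I1, I3
  have hxy : ∀ y ∈ S, ‖x - y‖ ^ ((1:ℝ)/4) ≤ R ^ ((1:ℝ)/4) := by
    intro y hy
    have hd : ‖x - y‖ < R := by
      have := hy.1
      rw [Metric.mem_ball] at this
      rw [← dist_eq_norm, dist_comm]
      exact this
    exact Real.rpow_le_rpow (norm_nonneg _) hd.le (by norm_num)
  have hI1 : ‖∫ y in S, (u t₂ x - u t₂ y)‖ ≤ (A * R ^ ((1:ℝ)/4)) * m := by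
    refine norm_setIntegral_le_of_norm_le_const hSfin (fun y hy => ?_)
    exact le_trans (hHold t₂ ht₂T x hx y (hSsubc hy))
      (mul_le_mul_of_nonneg_left (hxy y hy) hA)
  have hI3 : ‖∫ y in S, (u t₁ y - u t₁ x)‖ ≤ (A * R ^ ((1:ℝ)/4)) * m := by
    refine norm_setIntegral_le_of_norm_le_const hSfin (fun y hy => ?_)
    refine le_trans (hHold t₁ ht₁T y (hSsubc hy) x hx) ?_
    rw [norm_sub_rev]
    exact mul_le_mul_of_nonneg_left (hxy y hy) hA
  -- the middle term
  have hΩfin : volume Ω < ⊤ := hΩb.measure_lt_top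
  haveI hfin1 : IsFiniteMeasure (volume.restrict (Ioc t₁ t₂)) :=
    ⟨by rw [Measure.restrict_apply_univ]; exact measure_Ioc_lt_top⟩
  haveI hfin2 : IsFiniteMeasure (volume.restrict S) :=
    ⟨by rw [Measure.restrict_apply_univ]; exact hSfin⟩
  have hπ : (volume.restrict (Ioc t₁ t₂)).prod (volume.restrict S)
      = (volume.prod volume).restrict ((Ioc t₁ t₂) ×ˢ S) := Measure.prod_restrict _ _
  have hrectbfin : (volume.prod volume) ((Ioc τ T) ×ˢ Ω) ≠ ⊤ := by
    rw [Measure.prod_prod]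
    exact (ENNReal.mul_lt_top measure_Ioc_lt_top hΩfin).ne
  have hrectsfin : (volume.prod volume) ((Ioc t₁ t₂) ×ˢ S) ≠ ⊤ := by
    rw [Measure.prod_prod]
    exact (ENNReal.mul_lt_top measure_Ioc_lt_top hSfin).ne
  have hFcont : Continuous fun p : ℝ × (Fin 3 → ℝ) => ‖ut p.1 p.2‖ := hut.norm
  have hF2cont : Continuous fun p : ℝ × (Fin 3 → ℝ) => ‖ut p.1 p.2‖ ^ 2 := hut.norm.pow 2
  have hrectb : MeasurableSet ((Ioc τ T) ×ˢ Ω) := measurableSet_Ioc.prod hΩm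
  have hrects : MeasurableSet ((Ioc t₁ t₂) ×ˢ S) := measurableSet_Ioc.prod hSm
  have hmemb : ∀ p ∈ (Ioc τ T) ×ˢ Ω, ‖ut p.1 p.2‖ ≤ Mt := fun p hp =>
    hutbd p.1 (Ioc_subset_Icc_self hp.1) p.2 (subset_closure hp.2)
  have hmems : ∀ p ∈ (Ioc t₁ t₂) ×ˢ S, ‖ut p.1 p.2‖ ≤ Mt := fun p hp =>
    hutbd p.1 (Ioc_subset_Icc_self (Ioc_subset_Ioc ht₁ ht₂ hp.1)) p.2 (hSsubc hp.2)
  have hF2bigInt : IntegrableOn (fun p : ℝ × (Fin 3 → ℝ) => ‖ut p.1 p.2‖ ^ 2)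
      ((Ioc τ T) ×ˢ Ω) (volume.prod volume) := by
    refine Measure.integrableOn_of_bounded (M := Mt ^ 2) hrectbfin hF2cont.aestronglyMeasurable
      ((ae_restrict_iff' hrectb).mpr (ae_of_all _ fun p hp => ?_))
    rw [Real.norm_of_nonneg (sq_nonneg _)]
    exact pow_le_pow_left₀ (norm_nonneg _) (hmemb p hp) 2
  have hFsmallInt : IntegrableOn (fun p : ℝ × (Fin 3 → ℝ) => ‖ut p.1 p.2‖)
      ((Ioc t₁ t₂) ×ˢ S) (volume.prod volume) := by
    refine Measure.integrableOn_of_bounded (M := Mt) hrectsfin hFcont.aestronglyMeasurable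
      ((ae_restrict_iff' hrects).mpr (ae_of_all _ fun p hp => ?_))
    rw [norm_norm]
    exact hmems p hp
  -- hypothesis as product integral
  have hbig : (∫ t in τ..T, ∫ y in Ω, ‖ut t y‖ ^ 2)
      = ∫ p in (Ioc τ T) ×ˢ Ω, ‖ut p.1 p.2‖ ^ 2 ∂(volume.prod volume) := by
    rw [intervalIntegral.integral_of_le hτT, ← Measure.prod_restrict,
      integral_prod _ (by rw [Measure.prod_restrict]; exact hF2bigInt)]
  have hP : (∫ p in (Ioc t₁ t₂) ×ˢ S, ‖ut p.1 p.2‖ ^ 2 ∂(volume.prod volume)) ≤ B ^ 2 := by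
    refine le_trans (setIntegral_mono_set hF2bigInt
      (Eventually.of_forall fun p => sq_nonneg _)
      (HasSubset.Subset.eventuallyLE (prod_mono (Ioc_subset_Ioc ht₁ ht₂) hSsub))) ?_
    rw [← hbig]; exact hL2
  -- FTC
  have hFTC : ∀ y ∈ S, u t₂ y - u t₁ y = ∫ t in t₁..t₂, ut t y := by
    intro y hy
    have hd : ∀ t ∈ uIcc t₁ t₂, HasDerivAt (fun s => u s y) (ut t y) t := by
      intro t ht
      rw [uIcc_of_le h12.le] at ht
      exact hderiv y (hSsubc hy) t ⟨ht₁.trans ht.1, ht.2.trans ht₂⟩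
    exact (intervalIntegral.integral_eq_sub_of_hasDerivAt hd
      ((hut.comp (continuous_id.prodMk continuous_const)).intervalIntegrable t₁ t₂)).symm
  -- the L¹ norm of ut over the small rectangle
  have hFsmall' : Integrable (fun p : ℝ × (Fin 3 → ℝ) => ‖ut p.1 p.2‖)
      ((volume.restrict (Ioc t₁ t₂)).prod (volume.restrict S)) := by
    rw [Measure.prod_restrict]; exact hFsmallInt
  have hφint : IntegrableOn
      (fun y => ∫ t in Ioc t₁ t₂, ‖ut t y‖) S :=
    hFsmall'.integral_prod_right
  have hnormbd : ∀ y ∈ S, ‖u t₂ y - u t₁ y‖ ≤ ∫ t in Ioc t₁ t₂, ‖ut t y‖ := by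
    intro y hy
    rw [hFTC y hy]
    refine le_trans (intervalIntegral.norm_integral_le_integral_norm h12.le) ?_
    rw [intervalIntegral.integral_of_le h12.le]
  have hI2 : ‖∫ y in S, (u t₂ y - u t₁ y)‖ ≤ Real.sqrt (δ * m) * B := by
    calc ‖∫ y in S, (u t₂ y - u t₁ y)‖ ≤ ∫ y in S, ‖u t₂ y - u t₁ y‖ :=
          norm_integral_le_integral_norm _
      _ ≤ ∫ y in S, ∫ t in Ioc t₁ t₂, ‖ut t y‖ := by
          refine setIntegral_mono_on hI2int.norm hφint hSm hnormbd
      _ = ∫ p, ‖ut p.1 p.2‖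
            ∂((volume.restrict (Ioc t₁ t₂)).prod (volume.restrict S)) :=
          (integral_prod_symm _ hFsmall').symm
      _ ≤ Real.sqrt ((((volume.restrict (Ioc t₁ t₂)).prod (volume.restrict S)) univ).toReal)
            * Real.sqrt (∫ p, ‖ut p.1 p.2‖ ^ 2
              ∂((volume.restrict (Ioc t₁ t₂)).prod (volume.restrict S))) := by
          refine my_cs _ _ (fun p => norm_nonneg _) hFcont.aestronglyMeasurable Mt ?_
          rw [hπ]
          exact (ae_restrict_iff' hrects).mpr (ae_of_all _ fun p hp => by
            rw [norm_norm]; exact hmems p hp)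
      _ ≤ Real.sqrt (δ * m) * B := by
          have huniv : (((volume.restrict (Ioc t₁ t₂)).prod (volume.restrict S)) univ).toReal
              = δ * m := by
            rw [← univ_prod_univ, Measure.prod_prod, Measure.restrict_apply_univ,
              Measure.restrict_apply_univ, ENNReal.toReal_mul, Real.volume_Ioc,
              ENNReal.toReal_ofReal hδ0.le]
          have hsq : (∫ p, ‖ut p.1 p.2‖ ^ 2
              ∂((volume.restrict (Ioc t₁ t₂)).prod (volume.restrict S))) ≤ B ^ 2 := by
            rw [hπ]; exact hP
          rw [huniv]
          refine mul_le_mul_of_nonneg_left ?_ (Real.sqrt_nonneg _)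
          calc Real.sqrt (∫ p, ‖ut p.1 p.2‖ ^ 2
                ∂((volume.restrict (Ioc t₁ t₂)).prod (volume.restrict S)))
              ≤ Real.sqrt (B ^ 2) := Real.sqrt_le_sqrt hsq
            _ = B := Real.sqrt_sq hB
  -- assemble
  have hnorm3 : ‖u t₂ x - u t₁ x‖ ≤ m⁻¹ * ((A * R ^ ((1:ℝ)/4)) * m
      + (Real.sqrt (δ * m) * B + (A * R ^ ((1:ℝ)/4)) * m)) := by
    rw [key, norm_smul, Real.norm_of_nonneg (inv_nonneg.mpr hm0.le)]
    refine mul_le_mul_of_nonneg_left ?_ (inv_nonneg.mpr hm0.le)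
    refine le_trans (norm_add_le _ _) ?_
    exact add_le_add hI1 (le_trans (norm_add_le _ _) (add_le_add hI2 hI3))
  -- arithmetic
  have hR14 : R ^ ((1:ℝ)/4) = δ ^ ((1:ℝ)/14) := by
    rw [hRdef, ← Real.rpow_mul hδ0.le]
    norm_num
  have hR3 : R ^ 3 = δ ^ ((6:ℝ)/7) := by
    rw [hRdef, ← Real.rpow_natCast (δ ^ ((2:ℝ)/7)) 3, ← Real.rpow_mul hδ0.le]
    norm_num
  have hsm : Real.sqrt m ≥ Real.sqrt θ * δ ^ ((3:ℝ)/7) := by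
    have h1 : Real.sqrt (θ * R ^ 3) = Real.sqrt θ * δ ^ ((3:ℝ)/7) := by
      rw [Real.sqrt_mul hθpos.le, hR3, Real.sqrt_eq_rpow (δ ^ ((6:ℝ)/7)),
        ← Real.rpow_mul hδ0.le]
      norm_num
    rw [← h1]
    exact Real.sqrt_le_sqrt hmθ
  have hδ37 : (0:ℝ) < δ ^ ((3:ℝ)/7) := Real.rpow_pos_of_pos hδ0 _
  have hsm0 : 0 < Real.sqrt m := Real.sqrt_pos.mpr hm0
  have hterm2 : m⁻¹ * (Real.sqrt (δ * m) * B) ≤ (B / Real.sqrt θ) * δ ^ ((1:ℝ)/14) := by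
    have hmid : m⁻¹ * (Real.sqrt (δ * m) * B) = Real.sqrt δ * B / Real.sqrt m :=
      aux_sqrt δ m B hδ0.le hm0
    rw [hmid]
    have hstep : Real.sqrt δ * B / Real.sqrt m
        ≤ Real.sqrt δ * B / (Real.sqrt θ * δ ^ ((3:ℝ)/7)) := by
      apply div_le_div_of_nonneg_left (by positivity) (by positivity) hsm
    refine le_trans hstep (le_of_eq ?_)
    rw [Real.sqrt_eq_rpow]
    rw [show (1:ℝ)/2 = (3:ℝ)/7 + (1:ℝ)/14 by norm_num, Real.rpow_add hδ0]
    field_simp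
  have hd14 : (0:ℝ) ≤ δ ^ ((1:ℝ)/14) := (Real.rpow_pos_of_pos hδ0 _).le
  calc ‖u t₂ x - u t₁ x‖ ≤ m⁻¹ * ((A * R ^ ((1:ℝ)/4)) * m
        + (Real.sqrt (δ * m) * B + (A * R ^ ((1:ℝ)/4)) * m)) := hnorm3
    _ = 2 * A * R ^ ((1:ℝ)/4) + m⁻¹ * (Real.sqrt (δ * m) * B) := by
        field_simp
        ring
    _ ≤ 2 * A * δ ^ ((1:ℝ)/14) + (B / Real.sqrt θ) * δ ^ ((1:ℝ)/14) := by
        rw [hR14]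
        exact add_le_add le_rfl hterm2
    _ ≤ (2*A + B / Real.sqrt θ + 1) * δ ^ ((1:ℝ)/14) := by
        nlinarith [hd14]
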